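/- Let G be a graph with maximum degree Δ sufficiently large, c: V(G) → [Δ+1] a proper colouring of G, and M = Δ + ⌈7·log Δ⌉. Then there exists an assignment of a list L_v ⊆ [M] of size ⌈7·log Δ⌉ to each vertex v ∈ V(G) such that for every vertex w, the family of sets {L_v \ {c(v), c(w)} : v ∈ N_G(w)} has a transversal (a system of distinct representatives). -/

import Mathlib

open Finset

namespace LLLwork

variable {α β : Type} [Fintype α] [DecidableEq α] [DecidableEq β]

set_option linter.unusedSectionVars false

/-- counting independence for events depending on disjoint coordinate sets -/
lemma indep_count (t : Finset β) (P Q : (α → β) → Prop)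
    [DecidablePred P] [DecidablePred Q] (T U : Finset α)
    (hP : ∀ ω ω' : α → β, (∀ v ∈ T, ω v = ω' v) → (P ω ↔ P ω'))
    (hQ : ∀ ω ω' : α → β, (∀ v ∈ U, ω v = ω' v) → (Q ω ↔ Q ω'))
    (hTU : Disjoint T U) :
    ((Fintype.piFinset fun _ : α => t).filter (fun ω => P ω ∧ Q ω)).card
      * (Fintype.piFinset fun _ : α => t).card
    = ((Fintype.piFinset fun _ : α => t).filter P).card
      * ((Fintype.piFinset fun _ : α => t).filter Q).card := by
  set Ω := Fintype.piFinset fun _ : α => t with hΩ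
  have hmem : ∀ (ω τ : α → β), ω ∈ Ω → τ ∈ Ω →
      (fun v => if v ∈ T then ω v else τ v) ∈ Ω := by
    intro ω τ hω hτ
    rw [Fintype.mem_piFinset] at *
    intro v
    by_cases hv : v ∈ T
    · simpa [hv] using hω v
    · simpa [hv] using hτ v
  rw [← Finset.card_product, ← Finset.card_product]
  apply Finset.card_bij'
    (i := fun (x : (α → β) × (α → β)) _ =>
      ((fun v => if v ∈ T then x.1 v else x.2 v), (fun v => if v ∈ T then x.2 v else x.1 v)))
    (j := fun (x : (α → β) × (α → β)) _ =>
      ((fun v => if v ∈ T then x.1 v else x.2 v), (fun v => if v ∈ T then x.2 v else x.1 v)))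
  · rintro ⟨ω, τ⟩ hx
    simp only [Finset.mem_product, Finset.mem_filter] at hx ⊢
    obtain ⟨⟨hω, hPω, hQω⟩, hτ⟩ := hx
    refine ⟨⟨hmem _ _ hω hτ, ?_⟩, hmem _ _ hτ hω, ?_⟩
    · exact (hP ω _ (fun v hv => by simp [hv])).mp hPω
    · refine (hQ ω _ (fun v hv => ?_)).mp hQω
      have : v ∉ T := fun hvT => (Finset.disjoint_left.mp hTU hvT) hv
      simp [this]
  · rintro ⟨σ₁, σ₂⟩ hx
    simp only [Finset.mem_product, Finset.mem_filter] at hx ⊢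
    obtain ⟨⟨h1, hP1⟩, h2, hQ2⟩ := hx
    refine ⟨⟨hmem _ _ h1 h2, ?_, ?_⟩, hmem _ _ h2 h1⟩
    · exact (hP _ σ₁ (fun v hv => by simp [hv])).mpr hP1
    · refine (hQ _ σ₂ (fun v hv => ?_)).mpr hQ2
      have : v ∉ T := fun hvT => (Finset.disjoint_left.mp hTU hvT) hv
      simp [this]
  · rintro ⟨ω, τ⟩ _
    simp only [Prod.mk.injEq]
    constructor <;> · ext v; by_cases hv : v ∈ T <;> simp [hv]
  · rintro ⟨σ₁, σ₂⟩ _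
    simp only [Prod.mk.injEq]
    constructor <;> · ext v; by_cases hv : v ∈ T <;> simp [hv]

lemma count_split (t : Finset β) (B : α → (α → β) → Prop) [∀ j, DecidablePred (B j)]
    (S : Finset α) (i : α) (hi : i ∉ S) :
    ((Fintype.piFinset fun _ : α => t).filter (fun ω => ∀ j ∈ insert i S, ¬ B j ω)).card
      + ((Fintype.piFinset fun _ : α => t).filter (fun ω => B i ω ∧ ∀ j ∈ S, ¬ B j ω)).card
    = ((Fintype.piFinset fun _ : α => t).filter (fun ω => ∀ j ∈ S, ¬ B j ω)).card := by
  set Ω := Fintype.piFinset fun _ : α => t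
  have h1 : Ω.filter (fun ω => ∀ j ∈ insert i S, ¬ B j ω)
      = (Ω.filter (fun ω => ∀ j ∈ S, ¬ B j ω)).filter (fun ω => ¬ B i ω) := by
    rw [Finset.filter_filter]
    apply Finset.filter_congr
    intro ω _
    constructor
    · intro h
      exact ⟨fun j hj => h j (Finset.mem_insert_of_mem hj), h i (Finset.mem_insert_self i S)⟩
    · rintro ⟨h2, h1⟩ j hj
      rcases Finset.mem_insert.mp hj with rfl | hj
      exacts [h1, h2 j hj]
  have h2 : Ω.filter (fun ω => B i ω ∧ ∀ j ∈ S, ¬ B j ω)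
      = (Ω.filter (fun ω => ∀ j ∈ S, ¬ B j ω)).filter (fun ω => B i ω) := by
    rw [Finset.filter_filter]
    apply Finset.filter_congr
    intro ω _
    tauto
  rw [h1, h2, add_comm]
  exact Finset.card_filter_add_card_filter_not (fun ω => B i ω)

lemma lll_core (t : Finset β) (ht : t.Nonempty) (B : α → (α → β) → Prop)
    [∀ j, DecidablePred (B j)] (Γ : α → Finset α)
    (D : ℕ) (p q : ℝ) (hp0 : 0 ≤ p) (hq0 : 0 ≤ q) (hq1 : q < 1)
    (hdep : ∀ i (ω ω' : α → β), (∀ v ∈ Γ i, ω v = ω' v) → (B i ω ↔ B i ω'))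
    (hD : ∀ i, (Finset.univ.filter fun j => ¬ Disjoint (Γ i) (Γ j)).card ≤ D)
    (hp : ∀ i, (((Fintype.piFinset fun _ : α => t).filter (B i)).card : ℝ)
        ≤ p * ((Fintype.piFinset fun _ : α => t)).card)
    (hpq : p ≤ q * (1 - q) ^ D) :
    ∀ n (S : Finset α) (i : α), S.card ≤ n →
      (((Fintype.piFinset fun _ : α => t).filter (fun ω => B i ω ∧ ∀ j ∈ S, ¬ B j ω)).card : ℝ)
        ≤ q * ((Fintype.piFinset fun _ : α => t).filter (fun ω => ∀ j ∈ S, ¬ B j ω)).card := by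
  set Ω := Fintype.piFinset fun _ : α => t with hΩdef
  have hΩpos : (0:ℝ) < Ω.card := by
    have : Ω.Nonempty := Fintype.piFinset_nonempty.mpr (fun _ => ht)
    exact_mod_cast Finset.card_pos.mpr this
  have h1q : 0 < 1 - q := by linarith
  intro n
  induction n with
  | zero =>
    intro S i hS
    have hSe : S = ∅ := Finset.card_eq_zero.mp (Nat.le_zero.mp hS)
    subst hSe
    have he1 : Ω.filter (fun ω => B i ω ∧ ∀ j ∈ (∅ : Finset α), ¬ B j ω) = Ω.filter (B i) := by
      apply Finset.filter_congr; intro ω _; simp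
    have he2 : Ω.filter (fun ω => ∀ j ∈ (∅ : Finset α), ¬ B j ω) = Ω := by
      apply Finset.filter_true_of_mem; intro ω _; simp
    rw [he1, he2]
    calc ((Ω.filter (B i)).card : ℝ) ≤ p * Ω.card := hp i
    _ ≤ q * (1 - q) ^ D * Ω.card := by nlinarith
    _ ≤ q * Ω.card := by
        have hle : (1 - q) ^ D ≤ 1 := pow_le_one₀ (by linarith) (by linarith)
        have := mul_le_mul_of_nonneg_right (mul_le_mul_of_nonneg_left hle hq0) hΩpos.le
        simpa [mul_one] using this
  | succ n ih =>
    intro S i hS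
    set Dset := S.filter (fun j => ¬ Disjoint (Γ i) (Γ j)) with hDset
    set R := S \ Dset with hR
    have hRS : R ⊆ S := Finset.sdiff_subset
    have chain : ∀ E : Finset α, E ⊆ Dset →
        (1 - q) ^ E.card * ((Ω.filter (fun ω => ∀ j ∈ R, ¬ B j ω)).card : ℝ)
          ≤ ((Ω.filter (fun ω => ∀ j ∈ R ∪ E, ¬ B j ω)).card : ℝ) := by
      intro E
      induction E using Finset.induction_on with
      | empty =>
        intro _
        simp only [Finset.card_empty, pow_zero, one_mul, Finset.union_empty, le_refl]
      | @insert j E hjE ihE =>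
        intro hins
        have hjD : j ∈ Dset := hins (Finset.mem_insert_self j E)
        have hED : E ⊆ Dset := fun x hx => hins (Finset.mem_insert_of_mem hx)
        by_cases hjRE : j ∈ R ∪ E
        · have heq : R ∪ insert j E = R ∪ E := by
            rw [Finset.union_insert, Finset.insert_eq_self.mpr hjRE]
          rw [heq, Finset.card_insert_of_notMem hjE]
          calc (1-q)^(E.card + 1) * ((Ω.filter (fun ω => ∀ j ∈ R, ¬ B j ω)).card : ℝ)
              ≤ (1-q)^E.card * ((Ω.filter (fun ω => ∀ j ∈ R, ¬ B j ω)).card : ℝ) := by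
                apply mul_le_mul_of_nonneg_right _ (by positivity)
                apply pow_le_pow_of_le_one (le_of_lt h1q) (by linarith) (by omega)
            _ ≤ _ := ihE hED
        · have hcard : (R ∪ E).card ≤ n := by
            have hsub : R ∪ E ⊆ S.erase j := by
              intro x hx
              rcases Finset.mem_union.mp hx with hx | hx
              · refine Finset.mem_erase.mpr ⟨?_, hRS hx⟩
                rintro rfl; exact hjRE (Finset.mem_union_left _ hx)
              · refine Finset.mem_erase.mpr ⟨?_, Finset.filter_subset _ _ (hED hx)⟩
                rintro rfl; exact hjRE (Finset.mem_union_right _ hx)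
            calc (R ∪ E).card ≤ (S.erase j).card := Finset.card_le_card hsub
            _ = S.card - 1 := Finset.card_erase_of_mem (Finset.filter_subset _ _ hjD)
            _ ≤ n := by omega
          have hsplit := count_split t B (R ∪ E) j hjRE
          have hih := ih (R ∪ E) j hcard
          have hunioneq : R ∪ insert j E = insert j (R ∪ E) := by
            ext x
            simp only [Finset.mem_insert, Finset.mem_union]
            tauto
          rw [hunioneq, Finset.card_insert_of_notMem hjE]
          have hc : ((Ω.filter (fun ω => ∀ i ∈ insert j (R ∪ E), ¬ B i ω)).card : ℝ)
              = ((Ω.filter (fun ω => ∀ i ∈ R ∪ E, ¬ B i ω)).card : ℝ)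
                - ((Ω.filter (fun ω => B j ω ∧ ∀ i ∈ R ∪ E, ¬ B i ω)).card : ℝ) := by
            rw [eq_sub_iff_add_eq]
            exact_mod_cast hsplit
          rw [hc]
          calc (1-q)^(E.card+1) * ((Ω.filter (fun ω => ∀ j ∈ R, ¬ B j ω)).card : ℝ)
              = (1-q) * ((1-q)^E.card * ((Ω.filter (fun ω => ∀ j ∈ R, ¬ B j ω)).card : ℝ)) := by
                ring
            _ ≤ (1-q) * ((Ω.filter (fun ω => ∀ i ∈ R ∪ E, ¬ B i ω)).card : ℝ) := by
                apply mul_le_mul_of_nonneg_left (ihE hED) (le_of_lt h1q)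
            _ ≤ _ := by nlinarith [hih]
    have hGRdep : ∀ ω ω' : α → β, (∀ v ∈ R.biUnion Γ, ω v = ω' v) →
        ((∀ j ∈ R, ¬ B j ω) ↔ (∀ j ∈ R, ¬ B j ω')) := by
      intro ω ω' hagree
      have hjj : ∀ j ∈ R, (B j ω ↔ B j ω') := by
        intro j hj
        exact hdep j ω ω' (fun v hv => hagree v (Finset.mem_biUnion.mpr ⟨j, hj, hv⟩))
      constructor <;> · intro h j hj; have := hjj j hj; have := h j hj; tauto
    have hdisj : Disjoint (Γ i) (R.biUnion Γ) := by
      rw [Finset.disjoint_biUnion_right]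
      intro j hj
      have h2 := (Finset.mem_sdiff.mp hj).2
      rw [hDset, Finset.mem_filter] at h2
      push_neg at h2
      exact h2 (Finset.mem_sdiff.mp hj).1
    have hindep := indep_count t (B i) (fun ω => ∀ j ∈ R, ¬ B j ω) (Γ i) (R.biUnion Γ)
      (hdep i) hGRdep hdisj
    have hpR : ((Ω.filter (fun ω => B i ω ∧ ∀ j ∈ R, ¬ B j ω)).card : ℝ)
        ≤ p * ((Ω.filter (fun ω => ∀ j ∈ R, ¬ B j ω)).card : ℝ) := by
      have h1 : ((Ω.filter (fun ω => B i ω ∧ ∀ j ∈ R, ¬ B j ω)).card : ℝ) * Ω.card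
          = ((Ω.filter (B i)).card : ℝ) * ((Ω.filter (fun ω => ∀ j ∈ R, ¬ B j ω)).card : ℝ) := by
        exact_mod_cast hindep
      have hnn : (0:ℝ) ≤ ((Ω.filter (fun ω => ∀ j ∈ R, ¬ B j ω)).card : ℝ) := by positivity
      nlinarith [mul_le_mul_of_nonneg_right (hp i) hnn, hΩpos, h1]
    have hmono : ((Ω.filter (fun ω => B i ω ∧ ∀ j ∈ S, ¬ B j ω)).card : ℝ)
        ≤ ((Ω.filter (fun ω => B i ω ∧ ∀ j ∈ R, ¬ B j ω)).card : ℝ) := by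
      have hsub : Ω.filter (fun ω => B i ω ∧ ∀ j ∈ S, ¬ B j ω)
          ⊆ Ω.filter (fun ω => B i ω ∧ ∀ j ∈ R, ¬ B j ω) := by
        apply Finset.monotone_filter_right
        intro ω hω
        exact fun h => ⟨h.1, fun j hj => h.2 j (hRS hj)⟩
      exact_mod_cast Finset.card_le_card hsub
    have hd : Dset.card ≤ D := by
      refine le_trans (Finset.card_le_card ?_) (hD i)
      intro j hj
      rw [Finset.mem_filter] at hj ⊢
      exact ⟨Finset.mem_univ j, hj.2⟩
    have hRU : R ∪ Dset = S := by
      rw [hR]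
      exact Finset.sdiff_union_of_subset (Finset.filter_subset _ _)
    have hchain := chain Dset (le_refl _)
    rw [hRU] at hchain
    have hpq' : p ≤ q * (1 - q) ^ Dset.card := by
      calc p ≤ q * (1-q)^D := hpq
      _ ≤ q * (1-q)^Dset.card := by
          refine mul_le_mul_of_nonneg_left ?_ hq0
          exact pow_le_pow_of_le_one (le_of_lt h1q) (by linarith) hd
    calc ((Ω.filter (fun ω => B i ω ∧ ∀ j ∈ S, ¬ B j ω)).card : ℝ)
        ≤ ((Ω.filter (fun ω => B i ω ∧ ∀ j ∈ R, ¬ B j ω)).card : ℝ) := hmono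
      _ ≤ p * ((Ω.filter (fun ω => ∀ j ∈ R, ¬ B j ω)).card : ℝ) := hpR
      _ ≤ (q * (1-q)^Dset.card) * ((Ω.filter (fun ω => ∀ j ∈ R, ¬ B j ω)).card : ℝ) := by
          apply mul_le_mul_of_nonneg_right hpq' (by positivity)
      _ = q * ((1-q)^Dset.card * ((Ω.filter (fun ω => ∀ j ∈ R, ¬ B j ω)).card : ℝ)) := by ring
      _ ≤ q * ((Ω.filter (fun ω => ∀ j ∈ S, ¬ B j ω)).card : ℝ) := by
          apply mul_le_mul_of_nonneg_left hchain hq0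

theorem lll (t : Finset β) (ht : t.Nonempty) (B : α → (α → β) → Prop)
    [∀ j, DecidablePred (B j)] (Γ : α → Finset α)
    (D : ℕ) (p q : ℝ) (hp0 : 0 ≤ p) (hq0 : 0 ≤ q) (hq1 : q < 1)
    (hdep : ∀ i (ω ω' : α → β), (∀ v ∈ Γ i, ω v = ω' v) → (B i ω ↔ B i ω'))
    (hD : ∀ i, (Finset.univ.filter fun j => ¬ Disjoint (Γ i) (Γ j)).card ≤ D)
    (hp : ∀ i, (((Fintype.piFinset fun _ : α => t).filter (B i)).card : ℝ)
        ≤ p * ((Fintype.piFinset fun _ : α => t)).card)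
    (hpq : p ≤ q * (1 - q) ^ D) :
    ∃ ω ∈ Fintype.piFinset fun _ : α => t, ∀ i, ¬ B i ω := by
  set Ω := Fintype.piFinset fun _ : α => t with hΩdef
  have h1q : 0 < 1 - q := by linarith
  have key : ∀ S : Finset α, (0:ℝ) < (Ω.filter (fun ω => ∀ j ∈ S, ¬ B j ω)).card := by
    intro S
    induction S using Finset.induction_on with
    | empty =>
      have he2 : Ω.filter (fun ω => ∀ j ∈ (∅ : Finset α), ¬ B j ω) = Ω := by
        apply Finset.filter_true_of_mem; intro ω _; simp
      rw [he2]
      have : Ω.Nonempty := Fintype.piFinset_nonempty.mpr (fun _ => ht)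
      exact_mod_cast Finset.card_pos.mpr this
    | @insert i S hiS ihS =>
      have hsplit := count_split t B S i hiS
      have hcore := lll_core t ht B Γ D p q hp0 hq0 hq1 hdep hD hp hpq S.card S i (le_refl _)
      have hc : ((Ω.filter (fun ω => ∀ j ∈ insert i S, ¬ B j ω)).card : ℝ)
          = ((Ω.filter (fun ω => ∀ j ∈ S, ¬ B j ω)).card : ℝ)
            - ((Ω.filter (fun ω => B i ω ∧ ∀ j ∈ S, ¬ B j ω)).card : ℝ) := by
        rw [eq_sub_iff_add_eq]
        exact_mod_cast hsplit
      rw [hc]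
      nlinarith [ihS, hcore]
  have := key Finset.univ
  have hne : (Ω.filter (fun ω => ∀ j ∈ Finset.univ, ¬ B j ω)).Nonempty := by
    rw [← Finset.card_pos]
    exact_mod_cast this
  obtain ⟨ω, hω⟩ := hne
  rw [Finset.mem_filter] at hω
  exact ⟨ω, hω.1, fun i => hω.2 i (Finset.mem_univ i)⟩

lemma filter_pi (t : Finset β) (S : Finset α) (Pr : α → β → Prop) [∀ a, DecidablePred (Pr a)] :
    (Fintype.piFinset fun _ : α => t).filter (fun ω => ∀ v ∈ S, Pr v (ω v))
    = Fintype.piFinset (fun v => if v ∈ S then t.filter (Pr v) else t) := by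
  ext ω
  simp only [Finset.mem_filter, Fintype.mem_piFinset]
  constructor
  · rintro ⟨h1, h2⟩ v
    by_cases hv : v ∈ S
    · simpa [hv] using ⟨h1 v, h2 v hv⟩
    · simpa [hv] using h1 v
  · intro h
    constructor
    · intro v
      by_cases hv : v ∈ S
      · have := h v; rw [if_pos hv, Finset.mem_filter] at this; exact this.1
      · have := h v; rwa [if_neg hv] at this
    · intro v hv
      have := h v; rw [if_pos hv, Finset.mem_filter] at this; exact this.2

lemma count_event_le (t : Finset β) (S : Finset α) (Pr : α → β → Prop)
    [∀ a, DecidablePred (Pr a)] (m : ℕ)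
    (hc : ∀ v ∈ S, (t.filter (Pr v)).card ≤ m) :
    ((Fintype.piFinset fun _ : α => t).filter (fun ω => ∀ v ∈ S, Pr v (ω v))).card
      * t.card ^ S.card
    ≤ m ^ S.card * (Fintype.piFinset fun _ : α => t).card := by
  rw [filter_pi t S Pr, Fintype.card_piFinset, Fintype.card_piFinset]
  have hsplit : ∀ g : α → ℕ, ∏ v : α, g v = (∏ v ∈ S, g v) * ∏ v ∈ Finset.univ \ S, g v := by
    intro g
    rw [← Finset.prod_union (Finset.disjoint_sdiff)]
    congr 1
    ext x
    simp
  rw [hsplit, hsplit]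
  have h1 : ∏ v ∈ S, (if v ∈ S then t.filter (Pr v) else t).card
      = ∏ v ∈ S, (t.filter (Pr v)).card :=
    Finset.prod_congr rfl (fun v hv => by rw [if_pos hv])
  have h2 : ∏ v ∈ Finset.univ \ S, (if v ∈ S then t.filter (Pr v) else t).card
      = ∏ v ∈ Finset.univ \ S, t.card :=
    Finset.prod_congr rfl (fun v hv => by rw [if_neg (Finset.mem_sdiff.mp hv).2])
  rw [h1, h2, Finset.prod_const, Finset.prod_const]
  have h3 : ∏ v ∈ S, (t.filter (Pr v)).card ≤ m ^ S.card := by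
    rw [← Finset.prod_const]
    exact Finset.prod_le_prod' hc
  calc (∏ v ∈ S, (t.filter (Pr v)).card) * t.card ^ (Finset.univ \ S).card * t.card ^ S.card
      = (∏ v ∈ S, (t.filter (Pr v)).card) * (t.card ^ S.card * t.card ^ (Finset.univ \ S).card) := by
        ring
    _ ≤ m ^ S.card * (t.card ^ S.card * t.card ^ (Finset.univ \ S).card) :=
        Nat.mul_le_mul_right _ h3

lemma choose_mul_pow_le {M a k : ℕ} (h : a ≤ M) :
    a.choose k * M ^ k ≤ M.choose k * a ^ k := by
  have hd : a.descFactorial k * M ^ k ≤ M.descFactorial k * a ^ k := by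
    have e1 : M ^ k = ∏ _i ∈ Finset.range k, M := by simp
    have e2 : a ^ k = ∏ _i ∈ Finset.range k, a := by simp
    rw [Nat.descFactorial_eq_prod_range, Nat.descFactorial_eq_prod_range, e1, e2,
      ← Finset.prod_mul_distrib, ← Finset.prod_mul_distrib]
    apply Finset.prod_le_prod'
    intro i _
    rcases Nat.le_total a i with hai | hai
    · simp [Nat.sub_eq_zero_of_le hai]
    · have h3 : i * a ≤ i * M := Nat.mul_le_mul_left i h
      rw [Nat.sub_mul, Nat.sub_mul]
      have h4 : a * M = M * a := Nat.mul_comm a M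
      omega
  have ha := Nat.descFactorial_eq_factorial_mul_choose a k
  have hM := Nat.descFactorial_eq_factorial_mul_choose M k
  rw [ha, hM] at hd
  have hk : 0 < k.factorial := Nat.factorial_pos k
  calc a.choose k * M ^ k = (k.factorial * (a.choose k * M ^ k)) / k.factorial := by
        rw [Nat.mul_div_cancel_left _ hk]
    _ = (k.factorial * a.choose k * M ^ k) / k.factorial := by ring_nf
    _ ≤ (k.factorial * M.choose k * a ^ k) / k.factorial := Nat.div_le_div_right hd
    _ = (k.factorial * (M.choose k * a ^ k)) / k.factorial := by ring_nf
    _ = M.choose k * a ^ k := by rw [Nat.mul_div_cancel_left _ hk]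

set_option maxHeartbeats 1000000 in
/-- The key per-term numeric estimate. -/
lemma term_bound (Δ k s : ℕ)
    (hL : 100 ≤ Real.log Δ)
    (hk7 : 7 * Real.log Δ ≤ (k:ℝ))
    (hkD : k ≤ Δ)
    (hs1 : 1 ≤ s) (hsD : s ≤ Δ) :
    ((Δ.choose s : ℝ) * ((Δ+k).choose (s-1) : ℝ) * (((s+1).choose k : ℝ))^s) * (Δ:ℝ)^6
      ≤ (((Δ+k).choose k : ℝ))^s := by
  set M := Δ + k with hM
  set L := Real.log Δ with hLdef
  have hΔpos : 0 < Δ := by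
    by_contra h
    push_neg at h
    interval_cases Δ <;> simp_all [Real.log_zero] <;> linarith
  have hΔR : (0:ℝ) < (Δ:ℝ) := by exact_mod_cast hΔpos
  have hexp : Real.exp L = (Δ:ℝ) := Real.exp_log hΔR
  have hΔ1 : (1:ℝ) ≤ (Δ:ℝ) := by
    have h1 : (1:ℕ) ≤ Δ := hΔpos
    exact_mod_cast h1
  have hk700 : (700:ℝ) ≤ (k:ℝ) := by nlinarith
  have hk1 : 1 ≤ k := by
    have h1 : (1:ℝ) ≤ (k:ℝ) := by linarith
    exact_mod_cast h1
  have hkM : k ≤ M := by omega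
  have hMle : (M:ℝ) ≤ 2 * Δ := by
    have hkd : (k:ℝ) ≤ (Δ:ℝ) := by exact_mod_cast hkD
    have : (M:ℝ) = (Δ:ℝ) + (k:ℝ) := by push_cast [hM]; ring
    linarith
  have hMposn : 0 < M := by omega
  have hMpos : (0:ℝ) < (M:ℝ) := by exact_mod_cast hMposn
  have hM1 : (1:ℝ) ≤ (M:ℝ) := by
    have h1 : (1:ℕ) ≤ M := hMposn
    exact_mod_cast h1
  have hchooseMk : (0:ℝ) < (M.choose k : ℝ) := by exact_mod_cast Nat.choose_pos hkM
  have hlogM : Real.log M ≤ L + 1 := by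
    have h2 : Real.log M ≤ Real.log (2*Δ) :=
      Real.log_le_log hMpos hMle
    have h3 : Real.log (2*Δ) = Real.log 2 + L := by
      rw [Real.log_mul (by norm_num) (ne_of_gt hΔR)]
    have h4 : Real.log 2 ≤ 1 := by
      have := Real.log_le_sub_one_of_pos (by norm_num : (0:ℝ) < 2)
      linarith
    linarith
  by_cases hcase : 2 * (s + 1) ≤ M
  · -- spread case
    by_cases hsk : s + 1 < k
    · rw [Nat.choose_eq_zero_of_lt hsk]
      have hz : ((0:ℝ))^s = 0 := zero_pow (by omega)
      push_cast
      rw [hz]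
      have : (0:ℝ) ≤ ((M.choose k : ℝ))^s := by positivity
      simpa using this
    · push_neg at hsk
      have hk700n : 700 ≤ k := by exact_mod_cast hk700
      have hs6 : 6 ≤ s := by omega
      have hrat : ((s+1).choose k : ℝ) * (M:ℝ)^k ≤ (M.choose k : ℝ) * ((s+1:ℕ):ℝ)^k := by
        exact_mod_cast choose_mul_pow_le (show s + 1 ≤ M by omega)
      have h2k : ((s+1:ℕ):ℝ) * 2 ≤ (M:ℝ) := by
        have h5 : ((2*(s+1):ℕ):ℝ) ≤ ((M:ℕ):ℝ) := by exact_mod_cast hcase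
        push_cast at h5 ⊢
        linarith
      have hratio : ((s+1).choose k : ℝ) * 2^k ≤ (M.choose k : ℝ) := by
        have hpow : ((s+1:ℕ):ℝ)^k * 2^k ≤ (M:ℝ)^k := by
          rw [← mul_pow]
          apply pow_le_pow_left₀ (by positivity) h2k
        nlinarith [pow_pos (show (0:ℝ) < ((s+1:ℕ):ℝ) by positivity) k,
          pow_pos (show (0:ℝ) < (2:ℝ) by norm_num) k,
          (show (0:ℝ) ≤ (((s+1).choose k : ℕ):ℝ) by positivity),
          mul_le_mul_of_nonneg_left hpow (le_of_lt hchooseMk),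
          mul_le_mul_of_nonneg_right hrat (le_of_lt (pow_pos (show (0:ℝ) < 2 by norm_num) k))]
      have h2kDelta : (Δ:ℝ)^4 ≤ (2:ℝ)^k := by
        have hl2 : (0.6931:ℝ) ≤ Real.log 2 := by
          have := Real.log_two_gt_d9
          linarith
        have hkl : (4:ℝ) * L ≤ (k:ℝ) * Real.log 2 := by nlinarith
        calc (Δ:ℝ)^4 = Real.exp L ^ 4 := by rw [hexp]
        _ = Real.exp ((4:ℕ) * L) := by rw [← Real.exp_nat_mul]
        _ ≤ Real.exp ((k:ℝ) * Real.log 2) := by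
            apply Real.exp_le_exp.mpr
            push_cast
            linarith
        _ = Real.exp (Real.log 2) ^ k := by rw [← Real.exp_nat_mul]
        _ = (2:ℝ)^k := by rw [Real.exp_log (by norm_num)]
      have hC1 : (Δ.choose s : ℝ) ≤ (Δ:ℝ)^s := by exact_mod_cast Nat.choose_le_pow Δ s
      have hC2 : ((M.choose (s-1)) : ℝ) ≤ (M:ℝ)^s := by
        calc ((M.choose (s-1)) : ℝ) ≤ (M:ℝ)^(s-1) := by
              exact_mod_cast Nat.choose_le_pow M (s-1)
        _ ≤ (M:ℝ)^s := pow_le_pow_right₀ hM1 (Nat.sub_le s 1)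
      have hC3 : (((s+1).choose k : ℝ))^s * ((2:ℝ)^k)^s ≤ ((M.choose k : ℝ))^s := by
        rw [← mul_pow]
        apply pow_le_pow_left₀ (by positivity) hratio
      have hkey : (Δ:ℝ)^s * (M:ℝ)^s * (Δ:ℝ)^6 ≤ ((2:ℝ)^k)^s := by
        have hM2 : (M:ℝ)^s ≤ ((Δ:ℝ)^2)^s := by
          apply pow_le_pow_left₀ hMpos.le
          nlinarith [hk700, (show (k:ℝ) ≤ (Δ:ℝ) by exact_mod_cast hkD)]
        have e1 : (Δ:ℝ)^s * ((Δ:ℝ)^2)^s * (Δ:ℝ)^6 = (Δ:ℝ)^(3*s+6) := by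
          rw [← pow_mul, ← pow_add, ← pow_add]
          congr 1
          ring
        have e2 : (Δ:ℝ)^(3*s+6) ≤ (Δ:ℝ)^(4*s) := pow_le_pow_right₀ hΔ1 (by omega)
        have e3 : (Δ:ℝ)^(4*s) = ((Δ:ℝ)^4)^s := pow_mul (Δ:ℝ) 4 s
        have e4 : ((Δ:ℝ)^4)^s ≤ ((2:ℝ)^k)^s := pow_le_pow_left₀ (by positivity) h2kDelta s
        calc (Δ:ℝ)^s * (M:ℝ)^s * (Δ:ℝ)^6 ≤ (Δ:ℝ)^s * ((Δ:ℝ)^2)^s * (Δ:ℝ)^6 := by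
              apply mul_le_mul_of_nonneg_right _ (by positivity)
              apply mul_le_mul_of_nonneg_left hM2 (by positivity)
          _ = (Δ:ℝ)^(3*s+6) := e1
          _ ≤ (Δ:ℝ)^(4*s) := e2
          _ = ((Δ:ℝ)^4)^s := e3
          _ ≤ ((2:ℝ)^k)^s := e4
      calc ((Δ.choose s : ℝ) * ((M.choose (s-1)) : ℝ) * (((s+1).choose k : ℝ))^s) * (Δ:ℝ)^6
          ≤ ((Δ:ℝ)^s * (M:ℝ)^s * (((s+1).choose k : ℝ))^s) * (Δ:ℝ)^6 := by
            apply mul_le_mul_of_nonneg_right _ (by positivity)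
            apply mul_le_mul_of_nonneg_right _ (by positivity)
            exact mul_le_mul hC1 hC2 (by positivity) (by positivity)
        _ = (((s+1).choose k : ℝ))^s * ((Δ:ℝ)^s * (M:ℝ)^s * (Δ:ℝ)^6) := by ring
        _ ≤ (((s+1).choose k : ℝ))^s * ((2:ℝ)^k)^s := by
            apply mul_le_mul_of_nonneg_left hkey (by positivity)
        _ ≤ ((M.choose k : ℝ))^s := hC3
  · -- dense case
    push_neg at hcase
    obtain ⟨j, hjsum⟩ : ∃ j, s + j = Δ := ⟨Δ - s, by omega⟩
    have hΔc : ((Δ:ℕ):ℝ) = (s:ℝ) + (j:ℝ) := by exact_mod_cast hjsum.symm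
    have hMc : (M:ℝ) = (s:ℝ) + (k:ℝ) + (j:ℝ) := by
      have : ((M:ℕ):ℝ) = ((Δ:ℕ):ℝ) + ((k:ℕ):ℝ) := by exact_mod_cast congrArg (Nat.cast : ℕ → ℝ) hM
      rw [this, hΔc]; ring
    have hkj0 : (0:ℝ) ≤ (k:ℝ) + (j:ℝ) - 1 := by
      have : (1:ℝ) ≤ (k:ℝ) := by linarith
      have hjnn : (0:ℝ) ≤ (j:ℝ) := Nat.cast_nonneg j
      linarith
    set x : ℝ := ((k:ℝ) + (j:ℝ) - 1) / (M:ℝ) with hxdef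
    have hx0 : 0 ≤ x := div_nonneg hkj0 hMpos.le
    have hMx : (M:ℝ) * x = (k:ℝ) + (j:ℝ) - 1 := by
      rw [hxdef]
      field_simp
    have hs1M : ((s:ℝ)+1) = (M:ℝ)*(1-x) := by
      rw [mul_one_sub, hMx]
      linarith
    have hx1 : 0 ≤ 1 - x := by
      have hxle : x ≤ 1 := by
        rw [hxdef, div_le_one hMpos]
        have hs1R : (1:ℝ) ≤ (s:ℝ) := by exact_mod_cast hs1
        linarith [hMc]
      linarith
    have h3s : (M:ℝ) ≤ 3 * (s:ℝ) := by
      have h5 : M ≤ 2*s + 1 := by omega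
      have h6 : ((M:ℕ):ℝ) ≤ ((2*s+1:ℕ):ℝ) := by exact_mod_cast h5
      push_cast at h6
      have hs1R : (1:ℝ) ≤ (s:ℝ) := by exact_mod_cast hs1
      linarith
    -- choose bounds
    have hC1 : (Δ.choose s : ℝ) ≤ (Δ:ℝ)^j := by
      have e : Δ.choose s = Δ.choose j := by
        rw [show s = Δ - j by omega]
        exact Nat.choose_symm (by omega)
      rw [e]
      exact_mod_cast Nat.choose_le_pow Δ j
    have hC2 : ((M.choose (s-1)) : ℝ) ≤ (M:ℝ)^(k+j+1) := by
      have e : M.choose (s-1) = M.choose (k+j+1) := by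
        have h7 : M - (s-1) = k + j + 1 := by omega
        rw [← h7]
        exact (Nat.choose_symm (by omega)).symm
      rw [e]
      exact_mod_cast Nat.choose_le_pow M (k+j+1)
    have hratS : (((s+1).choose k : ℝ))^s * ((M:ℝ)^k)^s
        ≤ ((M.choose k : ℝ))^s * (((s+1:ℕ):ℝ)^k)^s := by
      rw [← mul_pow, ← mul_pow]
      apply pow_le_pow_left₀ (by positivity)
      exact_mod_cast choose_mul_pow_le (show s + 1 ≤ M by omega)
    -- exponential bounds
    have hA : (Δ:ℝ)^j * (M:ℝ)^(k+j+1) * (Δ:ℝ)^6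
        ≤ Real.exp ((j:ℝ)*L + ((k:ℝ)+(j:ℝ)+1)*Real.log M + 6*L) := by
      have e1 : (Δ:ℝ)^j = Real.exp ((j:ℝ)*L) := by
        rw [← hexp, ← Real.exp_nat_mul]
      have e2 : (M:ℝ)^(k+j+1) = Real.exp (((k:ℝ)+(j:ℝ)+1)*Real.log M) := by
        have hh : Real.exp (Real.log M) = (M:ℝ) := Real.exp_log hMpos
        calc (M:ℝ)^(k+j+1) = Real.exp (Real.log M) ^ (k+j+1) := by rw [hh]
        _ = Real.exp (((k+j+1:ℕ):ℝ) * Real.log M) := by rw [← Real.exp_nat_mul]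
        _ = Real.exp (((k:ℝ)+(j:ℝ)+1)*Real.log M) := by push_cast; ring_nf
      have e3 : (Δ:ℝ)^6 = Real.exp (6*L) := by
        rw [← hexp, ← Real.exp_nat_mul]
        norm_num
      rw [e1, e2, e3, ← Real.exp_add, ← Real.exp_add]
    have hB : (((s+1:ℕ):ℝ)^k)^s ≤ ((M:ℝ)^k)^s * Real.exp (-(((k*s:ℕ):ℝ) * x)) := by
      have e0 : (((s+1:ℕ):ℝ)^k)^s = ((s:ℝ)+1)^(k*s) := by
        rw [← pow_mul]
        congr 1
        push_cast
        ring
      have e1 : ((M:ℝ)^k)^s = (M:ℝ)^(k*s) := by rw [← pow_mul]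
      rw [e0, e1, hs1M, mul_pow]
      apply mul_le_mul_of_nonneg_left _ (by positivity)
      have h8 : 1 - x ≤ Real.exp (-x) := by
        have := Real.add_one_le_exp (-x)
        linarith
      calc (1-x)^(k*s) ≤ (Real.exp (-x))^(k*s) := pow_le_pow_left₀ hx1 h8 (k*s)
      _ = Real.exp (((k*s:ℕ):ℝ) * (-x)) := by rw [← Real.exp_nat_mul]
      _ = Real.exp (-(((k*s:ℕ):ℝ) * x)) := by ring_nf
    have hT : (j:ℝ)*L + ((k:ℝ)+(j:ℝ)+1)*Real.log M + 6*L ≤ ((k*s:ℕ):ℝ) * x := by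
      have hksx : (k:ℝ)*((k:ℝ)+(j:ℝ)-1)/3 ≤ ((k*s:ℕ):ℝ) * x := by
        have e1 : ((k*s:ℕ):ℝ) = (k:ℝ)*(s:ℝ) := by push_cast; ring
        rw [e1, hxdef, mul_div_assoc']
        rw [div_le_div_iff₀ (by norm_num) hMpos]
        have hknn : (0:ℝ) ≤ (k:ℝ) := Nat.cast_nonneg k
        nlinarith [mul_le_mul_of_nonneg_left h3s (mul_nonneg hknn hkj0)]
      have hlogMnn : (0:ℝ) ≤ (k:ℝ)+(j:ℝ)+1 := by positivity
      have h9 : ((k:ℝ)+(j:ℝ)+1)*Real.log M ≤ ((k:ℝ)+(j:ℝ)+1)*(L+1) :=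
        mul_le_mul_of_nonneg_left hlogM hlogMnn
      have hjnn : (0:ℝ) ≤ (j:ℝ) := Nat.cast_nonneg j
      have hT2 : (j:ℝ)*L + ((k:ℝ)+(j:ℝ)+1)*(L+1) + 6*L ≤ (k:ℝ)*((k:ℝ)+(j:ℝ)-1)/3 := by
        nlinarith [mul_nonneg (show (0:ℝ) ≤ L - 100 by linarith) (show (0:ℝ) ≤ (k:ℝ) - 700 by linarith),
          mul_nonneg (show (0:ℝ) ≤ L - 100 by linarith) hjnn,
          mul_nonneg (show (0:ℝ) ≤ (k:ℝ) - 7*L by linarith) hkj0]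
      linarith
    -- KEY inequality
    have hKEY : (Δ:ℝ)^j * (M:ℝ)^(k+j+1) * (Δ:ℝ)^6 * (((s+1:ℕ):ℝ)^k)^s ≤ ((M:ℝ)^k)^s := by
      calc (Δ:ℝ)^j * (M:ℝ)^(k+j+1) * (Δ:ℝ)^6 * (((s+1:ℕ):ℝ)^k)^s
          ≤ Real.exp ((j:ℝ)*L + ((k:ℝ)+(j:ℝ)+1)*Real.log M + 6*L)
            * (((M:ℝ)^k)^s * Real.exp (-(((k*s:ℕ):ℝ) * x))) := by
            apply mul_le_mul hA hB (by positivity) (by positivity)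
        _ = ((M:ℝ)^k)^s * Real.exp (((j:ℝ)*L + ((k:ℝ)+(j:ℝ)+1)*Real.log M + 6*L) - ((k*s:ℕ):ℝ) * x) := by
            rw [Real.exp_sub]
            rw [Real.exp_neg]
            field_simp
        _ ≤ ((M:ℝ)^k)^s * 1 := by
            apply mul_le_mul_of_nonneg_left _ (by positivity)
            have hle0 : ((j:ℝ)*L + ((k:ℝ)+(j:ℝ)+1)*Real.log M + 6*L) - ((k*s:ℕ):ℝ) * x ≤ 0 := by
              linarith
            calc Real.exp (((j:ℝ)*L + ((k:ℝ)+(j:ℝ)+1)*Real.log M + 6*L) - ((k*s:ℕ):ℝ) * x)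
                ≤ Real.exp 0 := Real.exp_le_exp.mpr hle0
            _ = 1 := Real.exp_zero
        _ = ((M:ℝ)^k)^s := by ring
    -- final assembly
    have hMkpos : (0:ℝ) < ((M:ℝ)^k)^s := by positivity
    apply le_of_mul_le_mul_right _ hMkpos
    calc (((Δ.choose s : ℝ)) * ((M.choose (s-1)) : ℝ) * (((s+1).choose k : ℝ))^s * (Δ:ℝ)^6)
          * ((M:ℝ)^k)^s
        = ((Δ.choose s : ℝ) * ((M.choose (s-1)) : ℝ) * (Δ:ℝ)^6)
          * ((((s+1).choose k : ℝ))^s * ((M:ℝ)^k)^s) := by ring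
      _ ≤ ((Δ.choose s : ℝ) * ((M.choose (s-1)) : ℝ) * (Δ:ℝ)^6)
          * (((M.choose k : ℝ))^s * (((s+1:ℕ):ℝ)^k)^s) := by
          apply mul_le_mul_of_nonneg_left hratS (by positivity)
      _ = ((M.choose k : ℝ))^s * ((Δ.choose s : ℝ) * ((M.choose (s-1)) : ℝ) * (Δ:ℝ)^6
            * (((s+1:ℕ):ℝ)^k)^s) := by ring
      _ ≤ ((M.choose k : ℝ))^s * ((Δ:ℝ)^j * (M:ℝ)^(k+j+1) * (Δ:ℝ)^6 * (((s+1:ℕ):ℝ)^k)^s) := by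
          apply mul_le_mul_of_nonneg_left _ (by positivity)
          apply mul_le_mul_of_nonneg_right _ (by positivity)
          apply mul_le_mul_of_nonneg_right _ (by positivity)
          exact mul_le_mul hC1 hC2 (by positivity) (by positivity)
      _ ≤ ((M.choose k : ℝ))^s * ((M:ℝ)^k)^s := by
          apply mul_le_mul_of_nonneg_left hKEY (by positivity)

end LLLwork
section Main
open Finset

set_option maxHeartbeats 2000000 in
theorem exists_lists_with_transversals :
    ∃ Δ₀ : ℕ, ∀ (V : Type) (_ : Fintype V) (_ : DecidableEq V) (G : SimpleGraph V)
      (_ : DecidableRel G.Adj), Δ₀ ≤ G.maxDegree →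
      ∀ c : V → ℕ, (∀ v, c v < G.maxDegree + 1) → (∀ u v, G.Adj u v → c u ≠ c v) →
        ∃ L : V → Finset ℕ,
          (∀ v, L v ⊆ Finset.range (G.maxDegree + ⌈7 * Real.log G.maxDegree⌉₊)) ∧
          (∀ v, (L v).card = ⌈7 * Real.log G.maxDegree⌉₊) ∧
          ∀ w : V, ∃ t : V → ℕ, Set.InjOn t (G.neighborSet w) ∧
            ∀ v ∈ G.neighborSet w, t v ∈ L v ∧ t v ≠ c v ∧ t v ≠ c w := by
  classical
  use Nat.ceil (Real.exp 100)
  intro V instV instDE G instAdj hΔ0 c hcbound hproper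
  set Δ := G.maxDegree with hΔdef
  set k := ⌈7 * Real.log Δ⌉₊ with hkdef
  set M := Δ + k with hMdef
  -- basic numeric facts
  have hΔR0 : (Real.exp 100 : ℝ) ≤ (Δ:ℝ) := by
    calc Real.exp 100 ≤ (⌈Real.exp 100⌉₊ : ℝ) := Nat.le_ceil _
    _ ≤ (Δ:ℝ) := by exact_mod_cast hΔ0
  have h51 : (51:ℝ) ≤ Real.exp 50 := by nlinarith [Real.add_one_le_exp (50:ℝ)]
  have h2601 : (2601:ℝ) ≤ (Δ:ℝ) := by
    have he : Real.exp 100 = Real.exp 50 * Real.exp 50 := by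
      rw [← Real.exp_add]; norm_num
    nlinarith
  have hΔRpos : (0:ℝ) < (Δ:ℝ) := by linarith
  have hΔpos : 0 < Δ := by exact_mod_cast hΔRpos
  have hL100 : 100 ≤ Real.log Δ := by
    rw [Real.le_log_iff_exp_le hΔRpos]
    exact hΔR0
  have hk7 : 7 * Real.log Δ ≤ (k:ℝ) := by
    rw [hkdef]
    exact Nat.le_ceil _
  have hkD : k ≤ Δ := by
    have hsqpos : (0:ℝ) < Real.sqrt Δ := Real.sqrt_pos.mpr hΔRpos
    have hsqrt14 : (14:ℝ) ≤ Real.sqrt Δ := by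
      rw [Real.le_sqrt (by norm_num) hΔRpos.le]
      nlinarith
    have hlogs : Real.log Δ = 2 * Real.log (Real.sqrt Δ) := by
      rw [Real.log_sqrt hΔRpos.le]; ring
    have h2 : Real.log (Real.sqrt Δ) ≤ Real.sqrt Δ - 1 :=
      Real.log_le_sub_one_of_pos hsqpos
    have hss : Real.sqrt Δ * Real.sqrt Δ = (Δ:ℝ) := Real.mul_self_sqrt hΔRpos.le
    have h3 : 7 * Real.log Δ ≤ (Δ:ℝ) := by nlinarith
    rw [hkdef]
    exact Nat.ceil_le.mpr h3
  have hk700 : (700:ℝ) ≤ (k:ℝ) := by nlinarith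
  have hk1 : 1 ≤ k := by
    have h1 : (1:ℝ) ≤ (k:ℝ) := by linarith
    exact_mod_cast h1
  have hkM : k ≤ M := by omega
  have hMRpos : (0:ℝ) < (M:ℝ) := by
    have : 0 < M := by omega
    exact_mod_cast this
  -- the list space and the probability space
  set Lset : Finset (Finset ℕ) := (Finset.range M).powersetCard k with hLsetdef
  have hLne : Lset.Nonempty := by
    rw [hLsetdef]
    apply Finset.powersetCard_nonempty.mpr
    rw [Finset.card_range]
    exact hkM
  set Ω := Fintype.piFinset fun _ : V => Lset with hΩdef
  -- bad events
  set Bad : V → (V → Finset ℕ) → Prop := fun w ω =>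
    ∃ S ∈ (G.neighborFinset w).powerset,
      ((S.biUnion fun v => ω v \ {c v, c w}).card < S.card) with hBaddef
  set Γ : V → Finset V := fun w => G.neighborFinset w with hΓdef
  -- parameters
  set p : ℝ := 2 / (Δ:ℝ)^5 with hpdef
  set q : ℝ := 1 / (Δ:ℝ)^3 with hqdef
  have hp0 : 0 ≤ p := by rw [hpdef]; positivity
  have hq0 : 0 ≤ q := by rw [hqdef]; positivity
  have hq1 : q < 1 := by
    rw [hqdef, div_lt_one (by positivity)]
    exact one_lt_pow₀ (by linarith) (by norm_num)
  -- dependence of events on coordinates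
  have hdep : ∀ i (ω ω' : V → Finset ℕ), (∀ v ∈ Γ i, ω v = ω' v) → (Bad i ω ↔ Bad i ω') := by
    intro i ω ω' hagree
    have key : ∀ S ∈ (G.neighborFinset i).powerset,
        (S.biUnion fun v => ω v \ {c v, c i}) = (S.biUnion fun v => ω' v \ {c v, c i}) := by
      intro S hS
      apply Finset.biUnion_congr rfl
      intro v hv
      rw [hagree v ((Finset.mem_powerset.mp hS) hv)]
    constructor
    · rintro ⟨S, hS, hc⟩
      exact ⟨S, hS, by rw [← key S hS]; exact hc⟩
    · rintro ⟨S, hS, hc⟩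
      exact ⟨S, hS, by rw [key S hS]; exact hc⟩
  -- dependency degree
  have hD : ∀ i, (Finset.univ.filter fun j => ¬ Disjoint (Γ i) (Γ j)).card ≤ Δ*Δ := by
    intro i
    have hsub : (Finset.univ.filter fun j => ¬ Disjoint (Γ i) (Γ j))
        ⊆ (Γ i).biUnion (fun u => G.neighborFinset u) := by
      intro j hj
      rw [Finset.mem_filter] at hj
      obtain ⟨u, hu1, hu2⟩ := Finset.not_disjoint_iff.mp hj.2
      apply Finset.mem_biUnion.mpr
      refine ⟨u, hu1, ?_⟩
      rw [SimpleGraph.mem_neighborFinset] at hu2 ⊢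
      exact hu2.symm
    calc (Finset.univ.filter fun j => ¬ Disjoint (Γ i) (Γ j)).card
        ≤ ((Γ i).biUnion (fun u => G.neighborFinset u)).card := Finset.card_le_card hsub
      _ ≤ ∑ u ∈ Γ i, (G.neighborFinset u).card := Finset.card_biUnion_le
      _ ≤ ∑ _u ∈ Γ i, Δ := by
          apply Finset.sum_le_sum
          intro u _
          rw [SimpleGraph.card_neighborFinset_eq_degree]
          exact G.degree_le_maxDegree u
      _ = (Γ i).card * Δ := by rw [Finset.sum_const, smul_eq_mul]
      _ ≤ Δ * Δ := by
          apply Nat.mul_le_mul_right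
          rw [hΓdef]
          rw [SimpleGraph.card_neighborFinset_eq_degree]
          exact G.degree_le_maxDegree i
  -- probability bound for bad events
  have hΩcard : (0:ℝ) ≤ (Ω.card : ℝ) := by positivity
  have hpbound : ∀ w, ((Ω.filter (Bad w)).card : ℝ) ≤ p * (Ω.card : ℝ) := by
    intro w
    set I : Finset (Finset V × Finset ℕ) :=
      (((G.neighborFinset w).powerset ×ˢ (Finset.range M).powerset).filter
        (fun ST => ST.2.card + 1 = ST.1.card)) with hIdef
    have hdegw : (G.neighborFinset w).card ≤ Δ := by
      rw [SimpleGraph.card_neighborFinset_eq_degree]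
      exact G.degree_le_maxDegree w
    -- inclusion into the union of simpler events
    have hsubset : Ω.filter (Bad w) ⊆ I.biUnion (fun ST =>
        Ω.filter (fun ω => ∀ v ∈ ST.1, ω v ⊆ ST.2 ∪ {c v, c w})) := by
      intro ω hω
      rw [Finset.mem_filter] at hω
      obtain ⟨hωΩ, S, hS, hcard⟩ := hω
      set T₀ := S.biUnion fun v => ω v \ {c v, c w} with hT₀def
      have hωL : ∀ v, ω v ⊆ Finset.range M := by
        intro v
        have := (Fintype.mem_piFinset.mp hωΩ) v
        rw [hLsetdef, Finset.mem_powersetCard] at this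
        exact this.1
      have hT₀range : T₀ ⊆ Finset.range M := by
        intro x hx
        obtain ⟨v, hv, hxv⟩ := Finset.mem_biUnion.mp hx
        exact hωL v (Finset.mem_sdiff.mp hxv).1
      have hScard : S.card ≤ Δ :=
        le_trans (Finset.card_le_card (Finset.mem_powerset.mp hS)) hdegw
      have hT₀card : T₀.card ≤ S.card - 1 := by omega
      obtain ⟨T, hT0T, hTrange, hTcard⟩ :=
        Finset.exists_subsuperset_card_eq hT₀range hT₀card
          (by rw [Finset.card_range]; omega)
      apply Finset.mem_biUnion.mpr
      refine ⟨(S, T), ?_, ?_⟩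
      · rw [hIdef, Finset.mem_filter, Finset.mem_product]
        refine ⟨⟨hS, Finset.mem_powerset.mpr hTrange⟩, ?_⟩
        simp only
        omega
      · rw [Finset.mem_filter]
        refine ⟨hωΩ, ?_⟩
        intro v hv x hx
        rw [Finset.mem_union]
        by_cases hxc : x ∈ ({c v, c w} : Finset ℕ)
        · exact Or.inr hxc
        · exact Or.inl (hT0T (Finset.mem_biUnion.mpr ⟨v, hv, Finset.mem_sdiff.mpr ⟨hx, hxc⟩⟩))
    have hcard1 : ((Ω.filter (Bad w)).card : ℝ)
        ≤ ∑ ST ∈ I, ((Ω.filter (fun ω => ∀ v ∈ ST.1, ω v ⊆ ST.2 ∪ {c v, c w})).card : ℝ) := by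
      have h1 : (Ω.filter (Bad w)).card
          ≤ (I.biUnion (fun ST =>
            Ω.filter (fun ω => ∀ v ∈ ST.1, ω v ⊆ ST.2 ∪ {c v, c w}))).card :=
        Finset.card_le_card hsubset
      have h2 := Finset.card_biUnion_le (s := I)
        (t := fun ST => Ω.filter (fun ω => ∀ v ∈ ST.1, ω v ⊆ ST.2 ∪ {c v, c w}))
      have := le_trans h1 h2
      exact_mod_cast this
    -- fiberwise regrouping
    have hmaps : ∀ ST ∈ I, ST.1.card ∈ Finset.range (Δ+1) := by
      intro ST hST
      rw [hIdef, Finset.mem_filter, Finset.mem_product] at hST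
      have := le_trans (Finset.card_le_card (Finset.mem_powerset.mp hST.1.1)) hdegw
      rw [Finset.mem_range]
      omega
    have hfib := Finset.sum_fiberwise_of_maps_to hmaps
      (fun ST => ((Ω.filter (fun ω => ∀ v ∈ ST.1, ω v ⊆ ST.2 ∪ {c v, c w})).card : ℝ))
    -- bound for each fiber
    have hinner : ∀ s ∈ Finset.range (Δ+1),
        (∑ ST ∈ I.filter (fun ST => ST.1.card = s),
          ((Ω.filter (fun ω => ∀ v ∈ ST.1, ω v ⊆ ST.2 ∪ {c v, c w})).card : ℝ))
        ≤ ((Δ:ℝ)^6)⁻¹ * (Ω.card : ℝ) := by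
      intro s hs
      by_cases hs0 : s = 0
      · subst hs0
        have hempty : I.filter (fun ST => ST.1.card = 0) = ∅ := by
          apply Finset.filter_eq_empty_iff.mpr
          intro ST hST
          rw [hIdef, Finset.mem_filter] at hST
          omega
        rw [hempty, Finset.sum_empty]
        positivity
      · have hs1 : 1 ≤ s := by omega
        have hsD : s ≤ Δ := by
          rw [Finset.mem_range] at hs
          omega
        have hCMkpos : (0:ℝ) < ((M.choose k : ℝ))^s := by
          have := Nat.choose_pos hkM
          positivity
        -- single event bound
        have hev : ∀ ST ∈ I.filter (fun ST => ST.1.card = s),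
            ((Ω.filter (fun ω => ∀ v ∈ ST.1, ω v ⊆ ST.2 ∪ {c v, c w})).card : ℝ)
            ≤ (((s+1).choose k : ℝ))^s / ((M.choose k : ℝ))^s * (Ω.card : ℝ) := by
          rintro ⟨S, T⟩ hST
          rw [Finset.mem_filter] at hST
          obtain ⟨hSTI, hScard⟩ := hST
          rw [hIdef, Finset.mem_filter, Finset.mem_product] at hSTI
          simp only at hScard hSTI ⊢
          have hTcard : T.card + 1 = s := by rw [← hScard]; exact hSTI.2
          -- count via count_event_le
          have hcnt := LLLwork.count_event_le Lset S
            (fun v A => A ⊆ T ∪ {c v, c w}) ((s+1).choose k) ?hc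
          case hc =>
            intro v hv
            have hfe : Lset.filter (fun A => A ⊆ T ∪ {c v, c w})
                = (Finset.range M ∩ (T ∪ {c v, c w})).powersetCard k := by
              ext A
              rw [Finset.mem_filter, hLsetdef, Finset.mem_powersetCard,
                Finset.mem_powersetCard, Finset.subset_inter_iff]
              tauto
            rw [hfe, Finset.card_powersetCard]
            apply Nat.choose_le_choose
            calc (Finset.range M ∩ (T ∪ {c v, c w})).card
                ≤ (T ∪ {c v, c w}).card := Finset.card_le_card Finset.inter_subset_right
              _ ≤ T.card + ({c v, c w} : Finset ℕ).card := Finset.card_union_le _ _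
              _ ≤ T.card + 2 := by
                  have := Finset.card_insert_le (c v) ({c w} : Finset ℕ)
                  simp only [Finset.card_singleton] at this
                  omega
              _ ≤ s + 1 := by omega
          -- hcnt : count * Lset.card ^ S.card ≤ ((s+1).choose k) ^ S.card * Ω.card
          have hLcard : Lset.card = M.choose k := by
            rw [hLsetdef, Finset.card_powersetCard, Finset.card_range]
          rw [hLcard, hScard] at hcnt
          rw [div_mul_eq_mul_div, le_div_iff₀ hCMkpos]
          calc ((Ω.filter (fun ω => ∀ v ∈ S, ω v ⊆ T ∪ {c v, c w})).card : ℝ)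
                * ((M.choose k : ℝ))^s
              = (((Ω.filter (fun ω => ∀ v ∈ S, ω v ⊆ T ∪ {c v, c w})).card
                  * (M.choose k)^s : ℕ) : ℝ) := by push_cast; ring
            _ ≤ ((((s+1).choose k)^s * Ω.card : ℕ) : ℝ) := by exact_mod_cast hcnt
            _ = (((s+1).choose k : ℝ))^s * (Ω.card : ℝ) := by push_cast; ring
        -- fiber size bound
        have hcount : (I.filter (fun ST => ST.1.card = s)).card
            ≤ Δ.choose s * M.choose (s-1) := by
          have hsub2 : I.filter (fun ST => ST.1.card = s)
              ⊆ ((G.neighborFinset w).powersetCard s) ×ˢ ((Finset.range M).powersetCard (s-1)) := by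
            rintro ⟨S, T⟩ hST
            rw [Finset.mem_filter] at hST
            obtain ⟨hSTI, hScard⟩ := hST
            rw [hIdef, Finset.mem_filter, Finset.mem_product] at hSTI
            simp only at hScard ⊢
            rw [Finset.mem_product]
            constructor
            · rw [Finset.mem_powersetCard]
              exact ⟨Finset.mem_powerset.mp hSTI.1.1, hScard⟩
            · rw [Finset.mem_powersetCard]
              refine ⟨Finset.mem_powerset.mp hSTI.1.2, ?_⟩
              have h9 : T.card + 1 = S.card := hSTI.2
              have h10 : S.card = s := hScard
              show T.card = s - 1
              omega
          calc (I.filter (fun ST => ST.1.card = s)).card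
              ≤ _ := Finset.card_le_card hsub2
            _ = ((G.neighborFinset w).powersetCard s).card
                * ((Finset.range M).powersetCard (s-1)).card := Finset.card_product _ _
            _ ≤ Δ.choose s * M.choose (s-1) := by
                rw [Finset.card_powersetCard, Finset.card_powersetCard, Finset.card_range]
                exact Nat.mul_le_mul (Nat.choose_le_choose s hdegw) (le_refl _)
        -- combine with term_bound
        have hterm := LLLwork.term_bound Δ k s hL100 hk7 hkD hs1 hsD
        have hstep : ((Δ.choose s : ℝ) * ((M.choose (s-1)):ℝ))
            * ((((s+1).choose k : ℝ))^s / ((M.choose k : ℝ))^s) ≤ ((Δ:ℝ)^6)⁻¹ := by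
          rw [mul_div_assoc']
          rw [div_le_iff₀ hCMkpos]
          have hpos6 : (0:ℝ) < (Δ:ℝ)^6 := by positivity
          have h6 := mul_le_mul_of_nonneg_right hterm (le_of_lt (inv_pos.mpr hpos6))
          rw [mul_inv_cancel_right₀ (ne_of_gt hpos6)] at h6
          calc (Δ.choose s : ℝ) * ((M.choose (s-1)):ℝ) * (((s+1).choose k : ℝ))^s
              = (Δ.choose s : ℝ) * ((M.choose (s-1)):ℝ) * (((s+1).choose k : ℝ))^s := rfl
            _ ≤ (((M.choose k):ℝ))^s * ((Δ:ℝ)^6)⁻¹ := h6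
            _ = ((Δ:ℝ)^6)⁻¹ * (((M.choose k):ℝ))^s := by ring
        calc (∑ ST ∈ I.filter (fun ST => ST.1.card = s),
              ((Ω.filter (fun ω => ∀ v ∈ ST.1, ω v ⊆ ST.2 ∪ {c v, c w})).card : ℝ))
            ≤ (I.filter (fun ST => ST.1.card = s)).card
              • ((((s+1).choose k : ℝ))^s / ((M.choose k : ℝ))^s * (Ω.card : ℝ)) :=
              Finset.sum_le_card_nsmul _ _ _ hev
          _ = ((I.filter (fun ST => ST.1.card = s)).card : ℝ)
              * ((((s+1).choose k : ℝ))^s / ((M.choose k : ℝ))^s * (Ω.card : ℝ)) := by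
              rw [nsmul_eq_mul]
          _ ≤ ((Δ.choose s * M.choose (s-1) : ℕ) : ℝ)
              * ((((s+1).choose k : ℝ))^s / ((M.choose k : ℝ))^s * (Ω.card : ℝ)) := by
              apply mul_le_mul_of_nonneg_right _ (by positivity)
              exact_mod_cast hcount
          _ = (((Δ.choose s : ℝ) * ((M.choose (s-1)):ℝ))
              * ((((s+1).choose k : ℝ))^s / ((M.choose k : ℝ))^s)) * (Ω.card : ℝ) := by
              push_cast
              ring
          _ ≤ ((Δ:ℝ)^6)⁻¹ * (Ω.card : ℝ) := by
              apply mul_le_mul_of_nonneg_right hstep hΩcard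
    -- sum it all up
    calc ((Ω.filter (Bad w)).card : ℝ)
        ≤ ∑ ST ∈ I, ((Ω.filter (fun ω => ∀ v ∈ ST.1, ω v ⊆ ST.2 ∪ {c v, c w})).card : ℝ) :=
          hcard1
      _ = ∑ s ∈ Finset.range (Δ+1), ∑ ST ∈ I.filter (fun ST => ST.1.card = s),
          ((Ω.filter (fun ω => ∀ v ∈ ST.1, ω v ⊆ ST.2 ∪ {c v, c w})).card : ℝ) := hfib.symm
      _ ≤ ∑ _s ∈ Finset.range (Δ+1), ((Δ:ℝ)^6)⁻¹ * (Ω.card : ℝ) :=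
          Finset.sum_le_sum hinner
      _ = ((Δ:ℝ)+1) * (((Δ:ℝ)^6)⁻¹ * (Ω.card : ℝ)) := by
          rw [Finset.sum_const, Finset.card_range, nsmul_eq_mul]
          push_cast
          ring
      _ ≤ p * (Ω.card : ℝ) := by
          rw [hpdef]
          have hfrac : ((Δ:ℝ)+1) * ((Δ:ℝ)^6)⁻¹ ≤ 2 / (Δ:ℝ)^5 := by
            rw [div_eq_mul_inv]
            have h1 : ((Δ:ℝ)+1) ≤ 2 * (Δ:ℝ) := by linarith
            have h2 : ((Δ:ℝ)^6)⁻¹ = ((Δ:ℝ)^5)⁻¹ * ((Δ:ℝ))⁻¹ := by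
              rw [show ((Δ:ℝ))^6 = (Δ:ℝ)^5 * (Δ:ℝ) by ring, mul_inv]
            rw [h2]
            calc ((Δ:ℝ)+1) * (((Δ:ℝ)^5)⁻¹ * ((Δ:ℝ))⁻¹)
                ≤ (2*(Δ:ℝ)) * (((Δ:ℝ)^5)⁻¹ * ((Δ:ℝ))⁻¹) := by
                  apply mul_le_mul_of_nonneg_right h1 (by positivity)
              _ = 2 * (((Δ:ℝ)) * ((Δ:ℝ))⁻¹) * ((Δ:ℝ)^5)⁻¹ := by ring
              _ = 2 * ((Δ:ℝ)^5)⁻¹ := by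
                  rw [mul_inv_cancel₀ (ne_of_gt hΔRpos)]
                  ring
          calc ((Δ:ℝ)+1) * (((Δ:ℝ)^6)⁻¹ * (Ω.card : ℝ))
              = (((Δ:ℝ)+1) * ((Δ:ℝ)^6)⁻¹) * (Ω.card : ℝ) := by ring
            _ ≤ (2/(Δ:ℝ)^5) * (Ω.card : ℝ) := by
                apply mul_le_mul_of_nonneg_right hfrac hΩcard
  -- LLL hypotheses : p ≤ q (1-q)^(Δ*Δ)
  have hpq : p ≤ q * (1 - q) ^ (Δ*Δ) := by
    have hDq : ((Δ*Δ : ℕ) : ℝ) * q = 1 / (Δ:ℝ) := by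
      rw [hqdef]
      push_cast
      field_simp
    have hbern : 1 - ((Δ*Δ:ℕ):ℝ) * q ≤ (1-q)^(Δ*Δ) := by
      have hb := one_add_mul_le_pow (a := -q) (by nlinarith) (Δ*Δ)
      calc 1 - ((Δ*Δ:ℕ):ℝ) * q = 1 + ((Δ*Δ:ℕ):ℝ) * (-q) := by ring
      _ ≤ (1 + (-q))^(Δ*Δ) := by
          have : ((Δ*Δ:ℕ):ℝ) = ((Δ*Δ : ℕ):ℝ) := rfl
          exact_mod_cast hb
      _ = (1-q)^(Δ*Δ) := by ring_nf
    have hhalf : (1:ℝ)/2 ≤ (1-q)^(Δ*Δ) := by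
      rw [hDq] at hbern
      have : 1/(Δ:ℝ) ≤ 1/2 := by
        rw [div_le_div_iff₀ hΔRpos (by norm_num)]
        linarith
      linarith
    rw [hpdef, hqdef]
    calc 2/(Δ:ℝ)^5 ≤ 1/(Δ:ℝ)^3 * (1/2) := by
          rw [div_mul_div_comm, div_le_div_iff₀ (by positivity) (by positivity)]
          have h4 : (4:ℝ) ≤ (Δ:ℝ)^2 := by nlinarith
          have h5 : (Δ:ℝ)^5 = (Δ:ℝ)^3 * (Δ:ℝ)^2 := by ring
          nlinarith [pow_pos hΔRpos 3]
      _ ≤ 1/(Δ:ℝ)^3 * (1-q)^(Δ*Δ) := by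
          apply mul_le_mul_of_nonneg_left hhalf (by positivity)
  -- apply the local lemma
  obtain ⟨ω, hωΩ, hgood⟩ := LLLwork.lll Lset hLne Bad Γ (Δ*Δ) p q hp0 hq0 hq1 hdep hD hpbound hpq
  -- extract the conclusion
  have hωL : ∀ v, ω v ∈ Lset := fun v => (Fintype.mem_piFinset.mp hωΩ) v
  refine ⟨ω, ?_, ?_, ?_⟩
  · intro v
    have := hωL v
    rw [hLsetdef, Finset.mem_powersetCard] at this
    exact this.1
  · intro v
    have := hωL v
    rw [hLsetdef, Finset.mem_powersetCard] at this
    exact this.2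
  · intro w
    have hnb : ¬ Bad w ω := hgood w
    have hall : ∀ s : Finset (↥(G.neighborFinset w)),
        s.card ≤ (s.biUnion (fun v => ω ↑v \ {c ↑v, c w})).card := by
      intro s
      by_contra hcon
      push_neg at hcon
      apply hnb
      refine ⟨s.image Subtype.val, Finset.mem_powerset.mpr ?_, ?_⟩
      · intro x hx
        obtain ⟨v, hv, rfl⟩ := Finset.mem_image.mp hx
        exact v.2
      · rw [Finset.image_biUnion, Finset.card_image_of_injective _ Subtype.val_injective]
        exact hcon
    obtain ⟨f, hfinj, hfmem⟩ := (Finset.all_card_le_biUnion_card_iff_existsInjective'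
      (fun v : ↥(G.neighborFinset w) => ω ↑v \ {c ↑v, c w})).mp hall
    refine ⟨fun v => if h : v ∈ G.neighborFinset w then f ⟨v, h⟩ else 0, ?_, ?_⟩
    · intro a ha b hb hab
      have ha' : a ∈ G.neighborFinset w := by
        rw [SimpleGraph.mem_neighborFinset]; exact ha
      have hb' : b ∈ G.neighborFinset w := by
        rw [SimpleGraph.mem_neighborFinset]; exact hb
      simp only [dif_pos ha', dif_pos hb'] at hab
      have := hfinj hab
      exact congrArg Subtype.val this
    · intro v hv
      have hv' : v ∈ G.neighborFinset w := by
        rw [SimpleGraph.mem_neighborFinset]; exact hv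
      have hm := hfmem ⟨v, hv'⟩
      rw [Finset.mem_sdiff] at hm
      simp only [dif_pos hv']
      refine ⟨hm.1, ?_, ?_⟩
      · intro hc
        apply hm.2
        rw [hc]
        exact Finset.mem_insert_self _ _
      · intro hc
        apply hm.2
        rw [hc]
        exact Finset.mem_insert_of_mem (Finset.mem_singleton_self _)

end Main
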